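/- (Proposition 2, strong duality.) Let q ∈ Δ, let A be an n × m real matrix, b ∈ ℝᵐ, and set Ω = {p ∈ ℝⁿ : Aᵀp = b}. Suppose p̂ ∈ Ω ∩ Δ minimizes p ↦ D_f(p, q) over Ω ∩ cl(Δ), and suppose λ̂ ∈ ℝᵐ satisfies ∇f(p̂) = ∇f(q) − Aλ̂. Then for every λ ∈ ℝᵐ for which there exists p_λ ∈ Δ with ∇f(p_λ) = ∇f(q) − Aλ, one has L(p_λ, q, λ) ≤ L(p̂, q, λ̂) = D_f(p̂, q), where L(p, q, λ) = D_f(p, q) + ⟨Aᵀp − b, λ⟩. In other words, λ̂ maximizes the dual objective and the optimal dual value equals the optimal primal value. -/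

import Mathlib

open scoped RealInnerProductSpace

/-- First-order condition: a convex differentiable function lies above its tangent. -/
lemma convexOn_first_order {E : Type*} [NormedAddCommGroup E] [NormedSpace ℝ E]
    {s : Set E} {g : E → ℝ} (hg : ConvexOn ℝ s g) {p r : E} (hp : p ∈ s) (hr : r ∈ s)
    {G : E →L[ℝ] ℝ} (hd : HasFDerivAt g G p) :
    g p + G (r - p) ≤ g r := by
  rcases eq_or_ne r p with h | h
  · simp [h]
  · set φ : ℝ → ℝ := g ∘ (AffineMap.lineMap p r : ℝ →ᵃ[ℝ] E) with hφ
    have hφconv : ConvexOn ℝ (Set.Icc (0:ℝ) 1) φ := by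
      refine (hg.comp_affineMap (AffineMap.lineMap p r)).subset ?_ (convex_Icc 0 1)
      intro t ht
      exact hg.1.lineMap_mem hp hr ht
    have hγ : HasDerivAt (fun t : ℝ => (AffineMap.lineMap p r : ℝ →ᵃ[ℝ] E) t) (r - p) 0 := by
      simp only [AffineMap.lineMap_apply, vsub_eq_sub, vadd_eq_add]
      simpa using ((hasDerivAt_id (0:ℝ)).smul_const (r - p)).add_const p
    have hγ0 : (AffineMap.lineMap p r : ℝ →ᵃ[ℝ] E) 0 = p := by
      simp [AffineMap.lineMap_apply]
    have hφd : HasDerivAt φ (G (r - p)) 0 := by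
      rw [← hγ0] at hd
      exact hd.comp_hasDerivAt 0 hγ
    have := hφconv.le_slope_of_hasDerivAt (Set.left_mem_Icc.2 zero_le_one)
      (Set.right_mem_Icc.2 zero_le_one) zero_lt_one hφd
    rw [slope_def_field] at this
    have hφ0 : φ 0 = g p := by simp [hφ, hγ0]
    have hφ1 : φ 1 = g r := by simp [hφ, AffineMap.lineMap_apply]
    rw [hφ0, hφ1] at this
    have : G (r - p) ≤ g r - g p := by
      simpa using this
    linarith

/-- (Proposition 2, strong duality.) For `q ∈ Δ`, `Ω = {p : Aᵀp = b}`, and the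
Lagrangian `L(p, q, λ) = D_f(p, q) + ⟪Aᵀp − b, λ⟫`: if `phat ∈ Ω ∩ Δ` minimizes `D_f(·, q)`
over `Ω ∩ cl(Δ)` and `λ̂` satisfies `∇f(phat) = ∇f(q) − Aλ̂`, then for every `λ` admitting
`p_λ ∈ Δ` with `∇f(p_λ) = ∇f(q) − Aλ`, one has `L(p_λ, q, λ) ≤ L(phat, q, λ̂) = D_f(phat, q)`. -/
theorem bregman_strong_duality {n m : ℕ} {Δ : Set (EuclideanSpace ℝ (Fin n))}
    (hne : Δ.Nonempty) (hopen : IsOpen Δ) (hconv : Convex ℝ Δ)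
    {f : EuclideanSpace ℝ (Fin n) → ℝ}
    (hcont : ContinuousOn f (closure Δ))
    (hdiff : DifferentiableOn ℝ f Δ)
    (hsc : StrictConvexOn ℝ (closure Δ) f)
    {D : EuclideanSpace ℝ (Fin n) → EuclideanSpace ℝ (Fin n) → ℝ}
    (hD : ∀ p q, D p q = f p - f q - ⟪gradient f q, p - q⟫)
    {q : EuclideanSpace ℝ (Fin n)} (hq : q ∈ Δ)
    (A : Matrix (Fin n) (Fin m) ℝ) (b : Fin m → ℝ)
    (L : EuclideanSpace ℝ (Fin n) → (Fin m → ℝ) → ℝ)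
    (hLdef : ∀ p l, L p l = D p q + ∑ j, (∑ i, A i j * p i - b j) * l j)
    {phat : EuclideanSpace ℝ (Fin n)}
    (hphatΩ : ∀ j, ∑ i, A i j * phat i = b j) (hphatΔ : phat ∈ Δ)
    (hmin : ∀ p : EuclideanSpace ℝ (Fin n),
      (∀ j, ∑ i, A i j * p i = b j) → p ∈ closure Δ → D phat q ≤ D p q)
    {lamhat : Fin m → ℝ}
    (hgradhat : ∀ i, gradient f phat i = gradient f q i - ∑ j, A i j * lamhat j) :
    L phat lamhat = D phat q ∧
      ∀ (lam : Fin m → ℝ) (plam : EuclideanSpace ℝ (Fin n)), plam ∈ Δ →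
        (∀ i, gradient f plam i = gradient f q i - ∑ j, A i j * lam j) →
        L plam lam ≤ L phat lamhat := by
  have hfirst : L phat lamhat = D phat q := by
    rw [hLdef]
    simp [hphatΩ]
  refine ⟨hfirst, ?_⟩
  intro lam plam hplam hgrad
  rw [hfirst]
  set w : EuclideanSpace ℝ (Fin n) := WithLp.toLp 2 (fun i => ∑ j, A i j * lam j) with hw
  set c : EuclideanSpace ℝ (Fin n) := w - gradient f q with hc
  set g : EuclideanSpace ℝ (Fin n) → ℝ := fun p => f p + ⟪c, p⟫ with hg
  -- g is convex on closure Δ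
  have hgconv : ConvexOn ℝ (closure Δ) g := by
    refine hsc.convexOn.add ⟨hconv.closure, ?_⟩
    intro x _ y _ a b' _ _ hab
    refine le_of_eq ?_
    simp only [inner_add_right, real_inner_smul_right, smul_eq_mul]
  -- g has zero derivative at plam
  have hdplam : DifferentiableAt ℝ f plam :=
    (hdiff plam hplam).differentiableAt (hopen.mem_nhds hplam)
  have hzero : gradient f plam + c = 0 := by
    ext i
    have h := hgrad i
    simp only [PiLp.add_apply, PiLp.zero_apply, hc, PiLp.sub_apply, h, hw, PiLp.toLp_apply]
    ring
  have hgradg : HasFDerivAt g (0 : EuclideanSpace ℝ (Fin n) →L[ℝ] ℝ) plam := by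
    have h1 : HasGradientAt f (gradient f plam) plam := hdplam.hasGradientAt
    have h2 : HasFDerivAt (fun p : EuclideanSpace ℝ (Fin n) => ⟪c, p⟫)
        (innerSL ℝ c) plam := (innerSL ℝ c).hasFDerivAt
    have h3 := (hasGradientAt_iff_hasFDerivAt.1 h1).add h2
    refine h3.congr_fderiv ?_
    ext v
    simp only [ContinuousLinearMap.zero_apply, ContinuousLinearMap.add_apply,
      InnerProductSpace.toDual_apply_apply, innerSL_apply_apply]
    rw [← inner_add_left, hzero, inner_zero_left]
  -- first order inequality
  have hkey : g plam ≤ g phat := by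
    have := convexOn_first_order hgconv (subset_closure hplam) (subset_closure hphatΔ) hgradg
    simpa using this
  -- rewrite L in terms of g
  set C : ℝ := - f q + ⟪gradient f q, q⟫ - ∑ j, b j * lam j with hC
  have hLg : ∀ p : EuclideanSpace ℝ (Fin n), L p lam = g p + C := by
    intro p
    rw [hLdef, hD]
    have hsum : ∑ j, (∑ i, A i j * p i - b j) * lam j
        = ⟪w, p⟫ - ∑ j, b j * lam j := by
      have h1 : ⟪w, p⟫ = ∑ i, (∑ j, A i j * lam j) * p i := by
        simp [PiLp.inner_apply, hw]
        exact Finset.sum_congr rfl fun _ _ => mul_comm _ _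
      have h2 : ∑ j, (∑ i, A i j * p i) * lam j = ∑ i, (∑ j, A i j * lam j) * p i := by
        calc ∑ j, (∑ i, A i j * p i) * lam j
            = ∑ j, ∑ i, A i j * p i * lam j := by
              simp [Finset.sum_mul]
          _ = ∑ i, ∑ j, A i j * p i * lam j := Finset.sum_comm
          _ = ∑ i, (∑ j, A i j * lam j) * p i := by
              refine Finset.sum_congr rfl fun i _ => ?_
              rw [Finset.sum_mul]
              exact Finset.sum_congr rfl fun j _ => by ring
      calc ∑ j, (∑ i, A i j * p i - b j) * lam j
          = ∑ j, ((∑ i, A i j * p i) * lam j - b j * lam j) := by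
            refine Finset.sum_congr rfl fun j _ => by ring
        _ = ∑ j, (∑ i, A i j * p i) * lam j - ∑ j, b j * lam j :=
            Finset.sum_sub_distrib ..
        _ = ⟪w, p⟫ - ∑ j, b j * lam j := by rw [h2, h1]
    rw [hsum]
    simp only [hg, hc, hC, inner_sub_left, inner_sub_right]
    ring
  calc L plam lam = g plam + C := hLg plam
    _ ≤ g phat + C := by linarith
    _ = L phat lam := (hLg phat).symm
    _ = D phat q := by rw [hLdef]; simp [hphatΩ]
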